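/- Let P be an m×m real symmetric matrix and S an m×n real matrix. Then the number of positive eigenvalues of SᵀPS (counted with multiplicity) is at most the number of positive eigenvalues of P, and at least the number of positive eigenvalues of P minus the nullity of Sᵀ. -/

import Mathlib

set_option synthInstance.maxHeartbeats 1000000
set_option maxHeartbeats 1000000

open Matrix

/-- Number of strictly positive eigenvalues (with multiplicity) of a real matrix,
when it is symmetric (Hermitian); junk value 0 otherwise. -/
noncomputable def posEigen {m : ℕ} (M : Matrix (Fin m) (Fin m) ℝ) : ℕ :=
  if h : M.IsHermitian then (Finset.univ.filter fun i => 0 < h.eigenvalues i).card else 0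

/-- Dimension of the kernel of (the linear map induced by) a real matrix. -/
noncomputable def nullity {m n : ℕ} (M : Matrix (Fin m) (Fin n) ℝ) : ℕ :=
  Module.finrank ℝ (LinearMap.ker M.mulVecLin)

variable {k : ℕ} {M : Matrix (Fin k) (Fin k) ℝ}

lemma repr_mulVec (hM : M.IsHermitian) (x : EuclideanSpace ℝ (Fin k)) (i : Fin k) :
    hM.eigenvectorBasis.repr (WithLp.toLp 2 (M *ᵥ x) : EuclideanSpace ℝ (Fin k)) i
      = hM.eigenvalues i * hM.eigenvectorBasis.repr x i := by
  rw [OrthonormalBasis.repr_apply_apply, OrthonormalBasis.repr_apply_apply]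
  have hsym := (Matrix.isHermitian_iff_isSymmetric.mp hM)
  have h1 : (WithLp.toLp 2 (M *ᵥ x) : EuclideanSpace ℝ (Fin k)) = Matrix.toEuclideanLin M x := by
    rfl
  rw [h1, ← hsym (hM.eigenvectorBasis i) x]
  have h2 : Matrix.toEuclideanLin M (hM.eigenvectorBasis i)
      = hM.eigenvalues i • hM.eigenvectorBasis i := by
    apply_fun (WithLp.equiv 2 (Fin k → ℝ))
    simp [Matrix.toEuclideanLin_apply]
    exact hM.mulVec_eigenvectorBasis i
  rw [h2, inner_smul_left]
  simp

lemma quad_eq (hM : M.IsHermitian) (x : EuclideanSpace ℝ (Fin k)) :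
    x ⬝ᵥ (M *ᵥ x) = ∑ i, hM.eigenvalues i * (hM.eigenvectorBasis.repr x i)^2 := by
  have : x ⬝ᵥ (M *ᵥ x) = inner ℝ x (WithLp.toLp 2 (M *ᵥ x) : EuclideanSpace ℝ (Fin k)) := by
    rw [EuclideanSpace.inner_eq_star_dotProduct]
    simp [dotProduct, mul_comm]
  rw [this, ← hM.eigenvectorBasis.repr.inner_map_map x (WithLp.toLp 2 (M *ᵥ x) : EuclideanSpace ℝ (Fin k))]
  rw [PiLp.inner_apply]
  congr 1; ext i
  rw [repr_mulVec hM x i]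
  simp [RCLike.inner_apply]
  ring

lemma posEigen_eq (hM : M.IsHermitian) :
    posEigen M = (Finset.univ.filter fun i => 0 < hM.eigenvalues i).card := dif_pos hM

lemma exists_pos_subspace (hM : M.IsHermitian) :
    ∃ W : Submodule ℝ (Fin k → ℝ), Module.finrank ℝ W = posEigen M ∧
      ∀ x ∈ W, x ≠ 0 → 0 < x ⬝ᵥ (M *ᵥ x) := by
  classical
  set b := hM.eigenvectorBasis with hb
  set s : Set (Fin k) := {i | 0 < hM.eigenvalues i} with hs
  refine ⟨(Submodule.span ℝ (⇑b.toBasis '' s)).map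
    (WithLp.linearEquiv 2 ℝ (Fin k → ℝ)).toLinearMap, ?_, ?_⟩
  · refine (LinearEquiv.finrank_map_eq _ _).trans ?_
    have hli : LinearIndependent ℝ (fun i : s => b.toBasis i) :=
      b.toBasis.linearIndependent.comp _ Subtype.val_injective
    have : (⇑b.toBasis '' s) = Set.range (fun i : s => b.toBasis i) := by
      rw [← Set.range_restrict]; rfl
    rw [this, posEigen_eq hM]
    have hfr : Module.finrank ℝ (Submodule.span ℝ (Set.range fun i : s => b.toBasis i)
        : Submodule ℝ (EuclideanSpace ℝ (Fin k))) = Fintype.card s := finrank_span_eq_card hli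
    refine Eq.trans hfr ?_
    simp [hs, Fintype.card_subtype]
  · intro x' hx'' hx0'
    obtain ⟨x, hx, rfl⟩ := Submodule.mem_map.mp hx''
    have hx0 : x ≠ 0 := by rintro rfl; exact hx0' (map_zero _)
    change 0 < (WithLp.ofLp x) ⬝ᵥ (M *ᵥ (WithLp.ofLp x))
    have hmem := (Module.Basis.mem_span_image b.toBasis).mp hx
    have hx' : (x : EuclideanSpace ℝ (Fin k)) ≠ 0 := hx0
    rw [quad_eq hM x]
    have hrep : ∀ i, i ∉ s → b.repr x i = 0 := by
      intro i hi
      by_contra h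
      exact hi (hmem (by simp [OrthonormalBasis.coe_toBasis_repr_apply] at h ⊢; exact h))
    obtain ⟨j, hj⟩ : ∃ j, b.repr x j ≠ 0 := by
      by_contra h
      push_neg at h
      exact hx' (by simpa using b.repr.map_eq_zero_iff.mp (by ext i; simpa using h i))
    have hjs : j ∈ s := by by_contra h; exact hj (hrep j h)
    apply Finset.sum_pos'
    · intro i _
      by_cases hi : i ∈ s
      · exact mul_nonneg (le_of_lt hi) (sq_nonneg _)
      · simp [← hb, hrep i hi]
    · exact ⟨j, Finset.mem_univ j, mul_pos hjs (by positivity)⟩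

lemma exists_neg_subspace (hM : M.IsHermitian) :
    ∃ N : Submodule ℝ (Fin k → ℝ), Module.finrank ℝ N = k - posEigen M ∧
      ∀ x ∈ N, x ⬝ᵥ (M *ᵥ x) ≤ 0 := by
  classical
  set b := hM.eigenvectorBasis with hb
  set s : Set (Fin k) := {i | ¬ 0 < hM.eigenvalues i} with hs
  refine ⟨(Submodule.span ℝ (⇑b.toBasis '' s)).map
    (WithLp.linearEquiv 2 ℝ (Fin k → ℝ)).toLinearMap, ?_, ?_⟩
  · refine (LinearEquiv.finrank_map_eq _ _).trans ?_
    have hli : LinearIndependent ℝ (fun i : s => b.toBasis i) :=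
      b.toBasis.linearIndependent.comp _ Subtype.val_injective
    have : (⇑b.toBasis '' s) = Set.range (fun i : s => b.toBasis i) := by
      rw [← Set.range_restrict]; rfl
    rw [this, posEigen_eq hM]
    have hfr : Module.finrank ℝ (Submodule.span ℝ (Set.range fun i : s => b.toBasis i)
        : Submodule ℝ (EuclideanSpace ℝ (Fin k))) = Fintype.card s := finrank_span_eq_card hli
    refine Eq.trans hfr ?_
    have h2 : Fintype.card s = (Finset.univ.filter fun i => ¬ 0 < hM.eigenvalues i).card := by
      simp [hs, Fintype.card_subtype]
    have h3 := Finset.card_filter_add_card_filter_not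
      (s := (Finset.univ : Finset (Fin k))) (p := fun i => 0 < hM.eigenvalues i)

    simp only [Finset.card_univ, Fintype.card_fin] at h3
    omega
  · intro x' hx''
    obtain ⟨x, hx, rfl⟩ := Submodule.mem_map.mp hx''
    change (WithLp.ofLp x) ⬝ᵥ (M *ᵥ (WithLp.ofLp x)) ≤ 0
    have hmem := (Module.Basis.mem_span_image b.toBasis).mp hx
    rw [quad_eq hM x]
    apply Finset.sum_nonpos
    intro i _
    by_cases hi : i ∈ s
    · exact mul_nonpos_of_nonpos_of_nonneg (le_of_not_gt hi) (sq_nonneg _)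
    · have : b.repr x i = 0 := by
        by_contra h
        exact hi (hmem (by simp [OrthonormalBasis.coe_toBasis_repr_apply] at h ⊢; exact h))
      simp [← hb, this]

lemma pos_subspace_le (hM : M.IsHermitian) (W : Submodule ℝ (Fin k → ℝ))
    (hW : ∀ x ∈ W, x ≠ 0 → 0 < x ⬝ᵥ (M *ᵥ x)) : Module.finrank ℝ W ≤ posEigen M := by
  obtain ⟨N, hNdim, hNneg⟩ := exists_neg_subspace hM
  have hdisj : W ⊓ N = ⊥ := by
    rw [Submodule.eq_bot_iff]
    rintro x ⟨hxW, hxN⟩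
    by_contra h
    exact absurd (hNneg x hxN) (not_le.mpr (hW x hxW h))
  have h1 := Submodule.finrank_sup_add_finrank_inf_eq W N
  rw [hdisj] at h1
  have h2 : Module.finrank ℝ ↥(W ⊔ N) ≤ k := by
    simpa [Module.finrank_fin_fun] using Submodule.finrank_le (W ⊔ N)
  have h4 : posEigen M ≤ k := by
    rw [posEigen_eq hM]
    exact le_trans (Finset.card_filter_le _ _) (by simp)
  simp only [finrank_bot] at h1
  omega

lemma dot_transform {m n : ℕ} (P : Matrix (Fin m) (Fin m) ℝ) (S : Matrix (Fin m) (Fin n) ℝ)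
    (x : Fin n → ℝ) : x ⬝ᵥ ((Sᵀ * P * S) *ᵥ x) = (S *ᵥ x) ⬝ᵥ (P *ᵥ (S *ᵥ x)) := by
  rw [← mulVec_mulVec, ← mulVec_mulVec, dotProduct_mulVec, vecMul_transpose]

theorem stmt0' {m n : ℕ} (P : Matrix (Fin m) (Fin m) ℝ) (hP : P.IsHermitian)
    (S : Matrix (Fin m) (Fin n) ℝ) :
    posEigen (Sᵀ * P * S) ≤ posEigen P ∧
      posEigen P ≤ posEigen (Sᵀ * P * S) + Module.finrank ℝ (LinearMap.ker Sᵀ.mulVecLin) := by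
  have hQ : (Sᵀ * P * S).IsHermitian := by
    have h := isHermitian_mul_mul_conjTranspose Sᵀ hP
    simpa using h
  set f := S.mulVecLin with hf
  constructor
  · -- first inequality
    obtain ⟨W, hWdim, hWpos⟩ := exists_pos_subspace hQ
    set g := f.domRestrict W with hg
    have hkerg : LinearMap.ker g = ⊥ := by
      rw [LinearMap.ker_eq_bot']
      rintro ⟨x, hxW⟩ hgx
      have hfx : S *ᵥ x = 0 := by simpa [hg, hf] using hgx
      have hx0 : x = 0 := by
        by_contra hx0
        have := hWpos x hxW hx0
        rw [dot_transform, hfx] at this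
        simp at this
      exact Subtype.ext hx0
    have hrn := LinearMap.finrank_range_add_finrank_ker g
    rw [hkerg] at hrn
    simp only [finrank_bot, add_zero] at hrn
    have hrange : LinearMap.range g = W.map f := LinearMap.range_domRestrict W f
    have hpos : ∀ y ∈ W.map f, y ≠ 0 → 0 < y ⬝ᵥ (P *ᵥ y) := by
      rintro y hy hy0
      obtain ⟨x, hxW, rfl⟩ := hy
      have hx0 : x ≠ 0 := by rintro rfl; simp [hf] at hy0
      have := hWpos x hxW hx0
      rwa [dot_transform] at this
    calc posEigen (Sᵀ * P * S) = Module.finrank ℝ (W.map f) := by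
          rw [← hWdim, ← hrange, hrn]
      _ ≤ posEigen P := pos_subspace_le hP _ hpos
  · -- second inequality
    obtain ⟨W, hWdim, hWpos⟩ := exists_pos_subspace hP
    set U := W.comap f with hU
    have hkerU : LinearMap.ker f ≤ U := by
      intro x hx
      simp only [hU, Submodule.mem_comap]
      rw [LinearMap.mem_ker.mp hx]
      exact W.zero_mem
    -- finrank U = finrank (W ⊓ range f) + finrank (ker f)
    set g := f.domRestrict U with hg
    have hrng : LinearMap.range g = Submodule.map f U := LinearMap.range_domRestrict U f
    have hmapU : Submodule.map f U = LinearMap.range f ⊓ W := Submodule.map_comap_eq f W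
    have hkerg : LinearMap.ker g = (LinearMap.ker f).comap U.subtype :=
      LinearMap.ker_domRestrict U f
    have hkdim : Module.finrank ℝ (LinearMap.ker g) = Module.finrank ℝ (LinearMap.ker f) := by
      rw [hkerg]
      exact (Submodule.comapSubtypeEquivOfLe hkerU).finrank_eq
    have hrn := LinearMap.finrank_range_add_finrank_ker g
    rw [hrng, hmapU, hkdim] at hrn
    -- rank facts
    have hrk1 := LinearMap.finrank_range_add_finrank_ker f
    have hrk2 := LinearMap.finrank_range_add_finrank_ker Sᵀ.mulVecLin
    simp only [Module.finrank_fin_fun] at hrk1 hrk2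
    have hrkT : Module.finrank ℝ (LinearMap.range f) =
        Module.finrank ℝ (LinearMap.range Sᵀ.mulVecLin) := by
      have := Matrix.rank_transpose S
      simpa [Matrix.rank, hf] using this.symm
    -- inf dimension bound
    have hinf := Submodule.finrank_sup_add_finrank_inf_eq W (LinearMap.range f)
    have hsup_le : Module.finrank ℝ ↥(W ⊔ LinearMap.range f) ≤ m := by
      simpa [Module.finrank_fin_fun] using Submodule.finrank_le (W ⊔ LinearMap.range f)
    -- complement of ker f
    obtain ⟨C, hC⟩ := Submodule.exists_isCompl (LinearMap.ker f)
    have hCdim := Submodule.finrank_add_eq_of_isCompl hC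
    simp only [Module.finrank_fin_fun] at hCdim
    have hinf2 := Submodule.finrank_sup_add_finrank_inf_eq U C
    have hsup2_le : Module.finrank ℝ ↥(U ⊔ C) ≤ n := by
      simpa [Module.finrank_fin_fun] using Submodule.finrank_le (U ⊔ C)
    -- U ⊓ C is a positive subspace for Sᵀ P S
    have hposUC : ∀ x ∈ U ⊓ C, x ≠ 0 → 0 < x ⬝ᵥ ((Sᵀ * P * S) *ᵥ x) := by
      rintro x ⟨hxU, hxC⟩ hx0
      have hfx : f x ≠ 0 := by
        intro h
        exact hx0 (Submodule.eq_bot_iff _ |>.mp hC.inf_eq_bot x ⟨h, hxC⟩)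
      rw [dot_transform]
      exact hWpos (f x) (Submodule.mem_comap.mp hxU) hfx
    have hle := pos_subspace_le hQ (U ⊓ C) hposUC
    have hinteq : Module.finrank ℝ ↥(LinearMap.range f ⊓ W) =
        Module.finrank ℝ ↥(W ⊓ LinearMap.range f) := by rw [inf_comm]
    rw [hinteq] at hrn
    omega


theorem stmt0 {m n : ℕ} (P : Matrix (Fin m) (Fin m) ℝ) (hP : P.IsHermitian)
    (S : Matrix (Fin m) (Fin n) ℝ) :
    posEigen (Sᵀ * P * S) ≤ posEigen P ∧
      posEigen P ≤ posEigen (Sᵀ * P * S) + nullity Sᵀ := by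
  exact stmt0' P hP S
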